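/- The two parameterizations ρ = (1/2, 1/2), A = [[1, 1/2, 0], [1, 1, 1/2]] and ρ̃ = (1/4, 3/4), Ã = [[1, 0, 0], [1, 1, 1/3]] of the asymmetric hub model with n_L = 2 hub nodes and n = 3 nodes induce the same probability distribution on {0,1}³. That is, for every g ∈ {0,1}³, Σ_{i=1}^{2} ρ_i Π_{j=1}^{3} A_{ij}^{g_j}(1-A_{ij})^{1-g_j} = Σ_{i=1}^{2} ρ̃_i Π_{j=1}^{3} Ã_{ij}^{g_j}(1-Ã_{ij})^{1-g_j}. -/

import Mathlib

open Finset

/-- The two parameterizations ρ = (1/2,1/2), A = [[1,1/2,0],[1,1,1/2]] and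
ρ̃ = (1/4,3/4), Ã = [[1,0,0],[1,1,1/3]] of the asymmetric hub model with
2 hubs and 3 nodes induce the same distribution on {0,1}³. -/
theorem stmt_3 :
    ∀ g : Fin 3 → Bool,
      (∑ i : Fin 2, (![(1:ℝ)/2, 1/2]) i *
          ∏ j : Fin 3, (if g j then (!![(1:ℝ), 1/2, 0; 1, 1, 1/2]) i j
            else 1 - (!![(1:ℝ), 1/2, 0; 1, 1, 1/2]) i j)) =
      (∑ i : Fin 2, (![(1:ℝ)/4, 3/4]) i *
          ∏ j : Fin 3, (if g j then (!![(1:ℝ), 0, 0; 1, 1, 1/3]) i j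
            else 1 - (!![(1:ℝ), 0, 0; 1, 1, 1/3]) i j)) := by
  intro g
  simp only [Fin.sum_univ_two, Fin.prod_univ_three, Matrix.cons_val', Matrix.cons_val_zero,
    Matrix.cons_val_one, Matrix.head_cons, Matrix.empty_val', Matrix.cons_val_fin_one,
    Matrix.head_fin_const, Matrix.of_apply, Matrix.cons_val_two, Matrix.tail_cons]
  cases h0 : g 0 <;> cases h1 : g 1 <;> cases h2 : g 2 <;> norm_num
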